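/- In a proper unital *-ring A with A_Σ salient: for all a, b ∈ A_+, if a product c_1 c_2 ⋯ c_n with each c_k ∈ {a,b} equals 0, then ab = 0. -/

import Mathlib

open Pointwise

/-- Finite sums of elements of the form `star a * a`. -/
def sSums (A : Type*) [Ring A] [StarRing A] : Set A :=
  (AddSubmonoid.closure {x : A | ∃ a : A, x = star a * a} : Set A)

/-- The *-positive elements. -/
def pos (A : Type*) [Ring A] [StarRing A] : Set A :=
  {a : A | ∃ n : ℕ, 0 < n ∧ n • a ∈ sSums A}

/-- The *-accretive elements. -/
def accr (A : Type*) [Ring A] [StarRing A] : Set A :=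
  {a : A | a + star a ∈ pos A}

/-- The order `a ⪯ b ⟺ b - a ∈ 𝔯`. -/
def ple {A : Type*} [Ring A] [StarRing A] (a b : A) : Prop := b - a ∈ accr A

/-- The cone `𝔠`. -/
def cone (A : Type*) [Ring A] [StarRing A] : Set A :=
  {a : A | ∃ n : ℕ, 0 < n ∧ ple (star a * a) (n • a)}

/-- The ball `𝔅`. -/
def ball (A : Type*) [Ring A] [StarRing A] : Set A :=
  {a : A | ple (star a * a) 1}

section Aux

variable {A : Type*} [Ring A] [StarRing A]

lemma sq_mem_sSums (z : A) : star z * z ∈ sSums A :=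
  AddSubmonoid.subset_closure ⟨z, rfl⟩

lemma one_mem_sSums : (1 : A) ∈ sSums A := by
  simpa using sq_mem_sSums (1 : A)

lemma sSums_star {s : A} (hs : s ∈ sSums A) : star s = s := by
  have hs' : s ∈ AddSubmonoid.closure {x : A | ∃ a : A, x = star a * a} := hs
  clear hs
  induction hs' using AddSubmonoid.closure_induction with
  | mem x hx => obtain ⟨c, rfl⟩ := hx; simp [star_mul]
  | zero => simp
  | add x y hx hy ihx ihy => simp [ihx, ihy]

lemma sSums_conj {s : A} (y : A) (hs : s ∈ sSums A) : star y * s * y ∈ sSums A := by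
  have hs' : s ∈ AddSubmonoid.closure {x : A | ∃ a : A, x = star a * a} := hs
  clear hs
  induction hs' using AddSubmonoid.closure_induction with
  | mem x hx =>
      obtain ⟨c, rfl⟩ := hx
      have : star y * (star c * c) * y = star (c * y) * (c * y) := by
        simp [star_mul, mul_assoc]
      rw [this]; exact sq_mem_sSums _
  | zero => rw [mul_zero, zero_mul]; exact AddSubmonoid.zero_mem _
  | add x z hx hz ihx ihz =>
      have : star y * (x + z) * y = star y * x * y + star y * z * y := by
        rw [mul_add, add_mul]
      rw [this]; exact AddSubmonoid.add_mem _ ihx ihz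

/-- From salience: a summand of a zero sum in `sSums` is zero. -/
lemma salient_add_zero (salient : sSums A ∩ (-sSums A) = {0})
    {s t : A} (hs : s ∈ sSums A) (ht : t ∈ sSums A) (h : s + t = 0) : s = 0 := by
  have hneg : s ∈ -(sSums A) := by
    rw [Set.mem_neg]
    have : -s = t := neg_eq_of_add_eq_zero_right h
    rw [this]; exact ht
  have : s ∈ ({0} : Set A) := by rw [← salient]; exact ⟨hs, hneg⟩
  simpa using this

/-- All summands of a zero sum of elements of `sSums` vanish. -/
lemma salient_list_sum_zero (salient : sSums A ∩ (-sSums A) = {0}) :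
    ∀ L : List A, (∀ s ∈ L, s ∈ sSums A) → L.sum = 0 → ∀ s ∈ L, s = 0 := by
  intro L
  induction L with
  | nil => simp
  | cons c t ih =>
      intro hmem hsum s hs
      have hc : c ∈ sSums A := hmem c (by simp)
      have htS : t.sum ∈ sSums A :=
        AddSubmonoid.list_sum_mem _ (fun x hx => hmem x (List.mem_cons_of_mem _ hx))
      have hsum' : c + t.sum = 0 := by simpa using hsum
      have hc0 : c = 0 := salient_add_zero salient hc htS hsum'
      have ht0 : t.sum = 0 := by rw [hc0, zero_add] at hsum'; exact hsum'
      rcases List.mem_cons.mp hs with rfl | hs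
      · exact hc0
      · exact ih (fun x hx => hmem x (List.mem_cons_of_mem _ hx)) ht0 s hs

/-- Proper + salient implies the ring is torsion free. -/
lemma torsionfree (proper : ∀ a : A, star a * a = 0 → a = 0)
    (salient : sSums A ∩ (-sSums A) = {0})
    {n : ℕ} (hn : 0 < n) {z : A} (h : n • z = 0) : z = 0 := by
  obtain ⟨m, rfl⟩ : ∃ m, n = m + 1 := ⟨n - 1, by omega⟩
  apply proper
  have hs : star z * z ∈ sSums A := sq_mem_sSums z
  have hsum : (star z * z) + m • (star z * z) = 0 := by
    have e : (m + 1) • (star z * z) = star z * ((m+1) • z) := (mul_smul_comm _ _ _).symm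
    have : (m + 1) • (star z * z) = 0 := by rw [e, h, mul_zero]
    calc (star z * z) + m • (star z * z) = (m + 1) • (star z * z) := by
          rw [succ_nsmul]; exact add_comm _ _
      _ = 0 := this
  exact salient_add_zero salient hs (AddSubmonoid.nsmul_mem _ hs m) hsum

lemma pos_star (proper : ∀ a : A, star a * a = 0 → a = 0)
    (salient : sSums A ∩ (-sSums A) = {0})
    {p : A} (hp : p ∈ pos A) : star p = p := by
  obtain ⟨n, hn, hs⟩ := hp
  have h1 : star (n • p) = n • p := sSums_star hs
  rw [star_nsmul] at h1
  have h2 : n • (star p - p) = 0 := by rw [smul_sub, h1, sub_self]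
  have := torsionfree proper salient hn h2
  exact sub_eq_zero.mp this

lemma sSums_subset_pos {s : A} (hs : s ∈ sSums A) : s ∈ pos A :=
  ⟨1, one_pos, by simpa using hs⟩

lemma pos_conj {p : A} (y : A) (hp : p ∈ pos A) : star y * p * y ∈ pos A := by
  obtain ⟨n, hn, hs⟩ := hp
  refine ⟨n, hn, ?_⟩
  have : n • (star y * p * y) = star y * (n • p) * y := by
    rw [mul_smul_comm, smul_mul_assoc]
  rw [this]
  exact sSums_conj y hs

lemma pos_pow (proper : ∀ a : A, star a * a = 0 → a = 0)
    (salient : sSums A ∩ (-sSums A) = {0})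
    {p : A} (hp : p ∈ pos A) : ∀ k : ℕ, p ^ k ∈ pos A := by
  have hsp : star p = p := pos_star proper salient hp
  intro k
  induction k using Nat.strong_induction_on with
  | _ k ih =>
    match k with
    | 0 => exact sSums_subset_pos (by simpa using one_mem_sSums)
    | 1 => simpa using hp
    | (k+2) =>
        have h := pos_conj p (ih k (by omega))
        rw [hsp] at h
        have e : p * p ^ k * p = p ^ (k + 2) := by
          rw [← pow_succ' p k, ← pow_succ]
        rwa [e] at h

/-- Representation of positives: extraction of a list of squares. -/
lemma sSums_exists_list {s : A} (hs : s ∈ sSums A) :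
    ∃ L : List A, (L.map fun z => star z * z).sum = s := by
  have hs' : s ∈ AddSubmonoid.closure {x : A | ∃ a : A, x = star a * a} := hs
  clear hs
  induction hs' using AddSubmonoid.closure_induction with
  | mem x hx => obtain ⟨c, rfl⟩ := hx; exact ⟨[c], by simp⟩
  | zero => exact ⟨[], by simp⟩
  | add x y hx hy ihx ihy =>
      obtain ⟨L1, h1⟩ := ihx; obtain ⟨L2, h2⟩ := ihy
      exact ⟨L1 ++ L2, by simp [h1, h2]⟩

/-- Key halving lemma: for `p` *-positive, `x p x* = 0` implies `p x* = 0`. -/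
lemma key_halving (proper : ∀ a : A, star a * a = 0 → a = 0)
    (salient : sSums A ∩ (-sSums A) = {0})
    {p x : A} (hp : p ∈ pos A) (h : x * p * star x = 0) : p * star x = 0 := by
  obtain ⟨n, hn, hs⟩ := hp
  obtain ⟨L, hL⟩ := sSums_exists_list hs
  -- the conjugated sum vanishes
  have hsum : (L.map fun z => star (z * star x) * (z * star x)).sum = 0 := by
    have e1 : ∀ z : A, star (z * star x) * (z * star x) = x * (star z * z) * star x := by
      intro z; simp [star_mul, mul_assoc]
    have e2 : ∀ M : List A,
        (M.map fun z => x * (star z * z) * star x).sum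
          = x * (M.map fun z => star z * z).sum * star x := by
      intro M
      induction M with
      | nil => simp
      | cons c t iht => simp [iht, mul_add, add_mul]
    have : (L.map fun z => star (z * star x) * (z * star x)).sum
        = x * (n • p) * star x := by
      rw [← hL, ← e2]
      congr 1
      exact List.map_congr_left (fun z _ => e1 z)
    rw [this, mul_smul_comm, smul_mul_assoc, h, smul_zero]
  have hz : ∀ z ∈ L, z * star x = 0 := by
    intro z hzL
    apply proper
    refine salient_list_sum_zero salient _ ?_ hsum _ (List.mem_map_of_mem hzL)
    intro s hsmem
    obtain ⟨z', _, rfl⟩ := List.mem_map.mp hsmem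
    exact sq_mem_sSums _
  have hmain : n • (p * star x) = 0 := by
    have e3 : ∀ M : List A, (∀ z ∈ M, z * star x = 0) →
        (M.map fun z => star z * z).sum * star x = 0 := by
      intro M
      induction M with
      | nil => simp
      | cons c t iht =>
          intro hM
          have hc : c * star x = 0 := hM c (by simp)
          have ht := iht (fun z hzt => hM z (List.mem_cons_of_mem _ hzt))
          simp [add_mul, ht, mul_assoc, hc]
    rw [← smul_mul_assoc, ← hL]
    exact e3 L hz
  exact torsionfree proper salient hn hmain

/-- end-run collapse: `x^k z = 0` implies `x z = 0` for self-adjoint `x`. -/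
lemma run_collapse (proper : ∀ a : A, star a * a = 0 → a = 0)
    {x : A} (hx : star x = x) :
    ∀ k : ℕ, 0 < k → ∀ z : A, x ^ k * z = 0 → x * z = 0 := by
  intro k
  induction k using Nat.strong_induction_on with
  | _ k ih =>
    intro hk z h
    match k, hk, h with
    | 1, _, h => simpa using h
    | (k+2), _, h =>
        have h1 : x ^ (k+1) * z = 0 := by
          apply proper
          have e : star (x ^ (k+1) * z) * (x ^ (k+1) * z)
              = star z * x ^ k * (x ^ (k+2) * z) := by
            rw [star_mul, star_pow, hx]
            calc star z * x ^ (k+1) * (x ^ (k+1) * z)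
                = star z * (x ^ (k+1) * x ^ (k+1)) * z := by
                  simp [mul_assoc]
              _ = star z * (x ^ k * x ^ (k+2)) * z := by rw [← pow_add, ← pow_add]; ring_nf
              _ = star z * x ^ k * (x ^ (k+2) * z) := by simp [mul_assoc]
          rw [e, h, mul_zero]
        exact ih (k+1) (by omega) (by omega) z h1

lemma star_list_prod (l : List A) (h : ∀ c ∈ l, star c = c) :
    star l.prod = l.reverse.prod := by
  induction l with
  | nil => simp
  | cons c t ih =>
      have hc : star c = c := h c (by simp)
      have ht := ih (fun x hx => h x (List.mem_cons_of_mem _ hx))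
      simp [star_mul, hc, ht]

/-- word decomposition lemma. -/
lemma word_decomp (x y : A) : ∀ v : List A, (∀ c ∈ v, c = x ∨ c = y) →
    (∃ k, v = List.replicate k x) ∨ (∃ u k, v = u ++ y :: List.replicate k x) := by
  intro v
  induction v with
  | nil => intro _; exact Or.inl ⟨0, rfl⟩
  | cons c t ih =>
      intro h
      rcases ih (fun d hd => h d (List.mem_cons_of_mem _ hd)) with ⟨k, rfl⟩ | ⟨u, k, rfl⟩
      · rcases h c (by simp) with rfl | rfl
        · exact Or.inl ⟨k + 1, rfl⟩
        · exact Or.inr ⟨[], k, rfl⟩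
      · exact Or.inr ⟨c :: u, k, rfl⟩

end Aux

theorem stmt13 {A : Type*} [Ring A] [StarRing A]
    (proper : ∀ a : A, star a * a = 0 → a = 0)
    (salient : sSums A ∩ (-sSums A) = {0})
    (a b : A) (ha : a ∈ pos A) (hb : b ∈ pos A)
    (l : List A) (hl : l ≠ []) (hmem : ∀ c ∈ l, c = a ∨ c = b)
    (h : l.prod = 0) : a * b = 0 := by
  have sa : star a = a := pos_star proper salient ha
  have sb : star b = b := pos_star proper salient hb
  suffices H : ∀ N : ℕ, ∀ l : List A, l.length ≤ N → l ≠ [] →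
      (∀ c ∈ l, c = a ∨ c = b) → l.prod = 0 → a * b = 0 from
    H l.length l le_rfl hl hmem h
  intro N
  induction N with
  | zero =>
      intro l hlen hne _ _
      cases l with
      | nil => exact absurd rfl hne
      | cons c t => simp at hlen
  | succ N IH =>
      intro l hlen hne hm hp0
      obtain ⟨v, y, rfl⟩ : ∃ v y, l = v ++ [y] := by
        rcases List.eq_nil_or_concat l with h' | ⟨v, y, h'⟩
        · exact absurd h' hne
        · exact ⟨v, y, by simpa using h'⟩
      have hy : y = a ∨ y = b := hm y (by simp)
      -- pick the other letter
      obtain ⟨x, hxab, hcov, htransfer⟩ :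
          ∃ x : A, (x = a ∨ x = b) ∧ (∀ c, (c = a ∨ c = b) → c = x ∨ c = y) ∧
            (x * y = 0 → a * b = 0) := by
        rcases hy with rfl | rfl
        · refine ⟨b, Or.inr rfl, fun c hc => hc.symm, fun hxy => ?_⟩
          have : star (b * y) = star (0 : A) := by rw [hxy]
          rw [star_mul, sb] at this
          have hsy : star y = y := sa
          rw [hsy] at this
          simpa using this
        · exact ⟨a, Or.inl rfl, fun c hc => hc, fun hxy => hxy⟩
      have hxpos : x ∈ pos A := by rcases hxab with rfl | rfl <;> assumption
      have sx : star x = x := pos_star proper salient hxpos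
      have sy : star y = y := by rcases hy with rfl | rfl <;> assumption
      have hvmem : ∀ c ∈ v, c = x ∨ c = y := fun c hc =>
        hcov c (hm c (List.mem_append_left _ hc))
      rcases word_decomp x y v hvmem with ⟨k, rfl⟩ | ⟨u, k, rfl⟩
      · -- l = x^k ++ [y]
        have hprod : x ^ k * y = 0 := by
          simpa [List.prod_append, List.prod_replicate] using hp0
        rcases Nat.eq_zero_or_pos k with rfl | hk
        · have hy0 : y = 0 := by simpa using hprod
          rcases hy with rfl | rfl
          · rw [hy0, zero_mul]
          · rw [hy0, mul_zero]
        · exact htransfer (run_collapse proper sx k hk y hprod)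
      · -- l = u ++ y :: x^k ++ [y]
        have hl0 : u.prod * (y * (x ^ k * y)) = 0 := by
          simpa [List.prod_append, List.prod_cons, List.prod_replicate, mul_assoc]
            using hp0
        have humem : ∀ c ∈ u, c = a ∨ c = b := fun c hc =>
          hm c (List.mem_append_left _ (List.mem_append_left _ hc))
        have hustar : star u.prod = u.reverse.prod := by
          apply star_list_prod
          intro c hc
          rcases humem c hc with rfl | rfl <;> assumption
        set X : A := u.prod * y with hX
        have hstarX : star X = y * u.reverse.prod := by
          rw [hX, star_mul, sy, hustar]
        have hpk : x ^ k ∈ pos A := pos_pow proper salient hxpos k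
        have hXpX : X * x ^ k * star X = 0 := by
          rw [hstarX, hX]
          calc u.prod * y * x ^ k * (y * u.reverse.prod)
              = (u.prod * (y * (x ^ k * y))) * u.reverse.prod := by
                simp [mul_assoc]
            _ = 0 := by rw [hl0, zero_mul]
        have hnew : x ^ k * (y * u.reverse.prod) = 0 := by
          have := key_halving proper salient hpk hXpX
          rwa [hstarX] at this
        -- apply IH to the new word
        set l' : List A := List.replicate k x ++ y :: u.reverse with hl'
        have hl'prod : l'.prod = 0 := by
          rw [hl']
          simpa [List.prod_append, List.prod_cons, List.prod_replicate] using hnew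
        have hl'len : l'.length ≤ N := by
          have : (u ++ y :: List.replicate k x ++ [y]).length = u.length + k + 2 := by
            simp; omega
          rw [this] at hlen
          rw [hl']
          simp
          omega
        have hl'ne : l' ≠ [] := by rw [hl']; simp
        have hl'mem : ∀ c ∈ l', c = a ∨ c = b := by
          intro c hc
          rw [hl'] at hc
          rcases List.mem_append.mp hc with hc | hc
          · rw [List.eq_of_mem_replicate hc]; exact hxab
          · rcases List.mem_cons.mp hc with rfl | hc
            · exact hy
            · exact humem c (List.mem_reverse.mp hc)
        exact IH l' hl'len hl'ne hl'mem hl'prod
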